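/- Multi-agent advantage discrepancy: for joint policies π¹, π², π³ on a finite MDP, with ε = max_{s,a} |A^{π¹}(s,a)|, |E_{s_t ∼ Pr^{π²}, a_t ∼ π²}[A^{π¹}(s_t, a_t)] − E_{s_t ∼ Pr^{π³}, a_t ∼ π²}[A^{π¹}(s_t, a_t)]| ≤ 4 ε · D_TV^max(π¹‖π²) · (1 − (1 − D_TV^max(π²‖π³))^t), where Pr^π denotes the state distribution at time t when acting by π from the initial distribution. -/

import Mathlib

open scoped BigOperators

namespace A2PO

/-- A finite discounted MDP with a fixed initial state distribution. -/
structure MDP (S A : Type) [Fintype S] [Fintype A] where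
  /-- transition kernel -/
  T : S → A → S → ℝ
  T_nonneg : ∀ s a s', 0 ≤ T s a s'
  T_sum : ∀ s a, ∑ s', T s a s' = 1
  /-- reward function -/
  r : S → A → ℝ
  /-- discount factor -/
  γ : ℝ
  γ_nonneg : 0 ≤ γ
  γ_lt_one : γ < 1
  /-- initial state distribution -/
  ρ : S → ℝ
  ρ_nonneg : ∀ s, 0 ≤ ρ s
  ρ_sum : ∑ s, ρ s = 1

variable {S A : Type} [Fintype S] [Fintype A] [DecidableEq S] [Nonempty S] [Nonempty A]

/-- A (joint) policy: a probability distribution over actions at each state. -/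
def IsPolicy (π : S → A → ℝ) : Prop :=
  (∀ s a, 0 ≤ π s a) ∧ ∀ s, ∑ a, π s a = 1

/-- One step of the state-distribution evolution under policy `π`. -/
noncomputable def stepDist (M : MDP S A) (π : S → A → ℝ) (p : S → ℝ) : S → ℝ :=
  fun s' => ∑ s, ∑ a, p s * π s a * M.T s a s'

/-- The state distribution at time `t` under policy `π`, `Pr(s_t = s | π)`. -/
noncomputable def stateDist (M : MDP S A) (π : S → A → ℝ) : ℕ → S → ℝ
  | 0 => M.ρ
  | t + 1 => stepDist M π (stateDist M π t)

/-- The state distribution at time `t` under `π`, starting from state `s0`. -/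
noncomputable def stateDistFrom (M : MDP S A) (π : S → A → ℝ) (s0 : S) : ℕ → S → ℝ
  | 0 => fun s => if s = s0 then 1 else 0
  | t + 1 => stepDist M π (stateDistFrom M π s0 t)

/-- Expected one-step reward of `π` under state distribution `p`. -/
noncomputable def expReward (M : MDP S A) (π : S → A → ℝ) (p : S → ℝ) : ℝ :=
  ∑ s, p s * ∑ a, π s a * M.r s a

/-- The value function `V^π(s)`. -/
noncomputable def V (M : MDP S A) (π : S → A → ℝ) (s0 : S) : ℝ :=
  ∑' t : ℕ, M.γ ^ t * expReward M π (stateDistFrom M π s0 t)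

/-- The advantage function `A^π(s,a)`. -/
noncomputable def Adv (M : MDP S A) (π : S → A → ℝ) (s : S) (a : A) : ℝ :=
  M.r s a + M.γ * (∑ s', M.T s a s' * V M π s') - V M π s

/-- The expected discounted return `J(π)`. -/
noncomputable def J (M : MDP S A) (π : S → A → ℝ) : ℝ :=
  ∑' t : ℕ, M.γ ^ t * expReward M π (stateDist M π t)

/-- The normalized discounted state-visitation distribution `d^π`. -/
noncomputable def visit (M : MDP S A) (π : S → A → ℝ) (s : S) : ℝ :=
  (1 - M.γ) * ∑' t : ℕ, M.γ ^ t * stateDist M π t s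

/-- Total variation distance between two distributions on a finite set. -/
noncomputable def tv (p q : A → ℝ) : ℝ := (1 / 2) * ∑ a, |p a - q a|

/-- Maximal (over states) total variation distance between two policies. -/
noncomputable def tvMax (p q : S → A → ℝ) : ℝ := ⨆ s : S, tv (p s) (q s)


/-! ### auxiliary lemmas -/

lemma stepDist_nonneg (M : MDP S A) {π : S → A → ℝ} (hπ : ∀ s a, 0 ≤ π s a)
    {p : S → ℝ} (hp : ∀ s, 0 ≤ p s) : ∀ s', 0 ≤ stepDist M π p s' := by
  intro s'
  refine Finset.sum_nonneg fun s _ => Finset.sum_nonneg fun a _ => ?_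
  exact mul_nonneg (mul_nonneg (hp s) (hπ s a)) (M.T_nonneg s a s')

lemma stepDist_sum (M : MDP S A) {π : S → A → ℝ} (hπ : ∀ s, ∑ a, π s a = 1)
    (p : S → ℝ) : ∑ s', stepDist M π p s' = ∑ s, p s := by
  unfold stepDist
  rw [Finset.sum_comm]
  refine Finset.sum_congr rfl fun s _ => ?_
  rw [Finset.sum_comm]
  calc ∑ a, ∑ s', p s * π s a * M.T s a s' = ∑ a, p s * π s a := by
        refine Finset.sum_congr rfl fun a _ => ?_
        rw [← Finset.mul_sum, M.T_sum, mul_one]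
    _ = p s := by rw [← Finset.mul_sum, hπ, mul_one]

lemma stateDist_nonneg (M : MDP S A) {π : S → A → ℝ} (hπ : IsPolicy π) :
    ∀ t s, 0 ≤ stateDist M π t s := by
  intro t
  induction t with
  | zero => exact M.ρ_nonneg
  | succ t ih => exact stepDist_nonneg M hπ.1 ih

lemma stateDist_sum (M : MDP S A) {π : S → A → ℝ} (hπ : IsPolicy π) :
    ∀ t, ∑ s, stateDist M π t s = 1 := by
  intro t
  induction t with
  | zero => exact M.ρ_sum
  | succ t ih => rw [stateDist, stepDist_sum M hπ.2, ih]

lemma stateDistFrom_nonneg (M : MDP S A) {π : S → A → ℝ} (hπ : IsPolicy π) (s0 : S) :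
    ∀ t s, 0 ≤ stateDistFrom M π s0 t s := by
  intro t
  induction t with
  | zero => intro s; simp only [stateDistFrom]; positivity
  | succ t ih => exact stepDist_nonneg M hπ.1 ih

lemma stateDistFrom_sum (M : MDP S A) {π : S → A → ℝ} (hπ : IsPolicy π) (s0 : S) :
    ∀ t, ∑ s, stateDistFrom M π s0 t s = 1 := by
  intro t
  induction t with
  | zero => simp [stateDistFrom]
  | succ t ih => rw [stateDistFrom, stepDist_sum M hπ.2, ih]

lemma stepDist_lin (M : MDP S A) (π : S → A → ℝ) (w : S → ℝ) (ps : S → S → ℝ) (s' : S) :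
    stepDist M π (fun s => ∑ i, w i * ps i s) s' = ∑ i, w i * stepDist M π (ps i) s' := by
  simp only [stepDist]
  calc ∑ s, ∑ a, (∑ i, w i * ps i s) * π s a * M.T s a s'
      = ∑ s, ∑ a, ∑ i, w i * (ps i s * π s a * M.T s a s') := by
        refine Finset.sum_congr rfl fun s _ => Finset.sum_congr rfl fun a _ => ?_
        rw [Finset.sum_mul, Finset.sum_mul]
        exact Finset.sum_congr rfl fun i _ => by ring
    _ = ∑ s, ∑ i, ∑ a, w i * (ps i s * π s a * M.T s a s') := by
        exact Finset.sum_congr rfl fun s _ => Finset.sum_comm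
    _ = ∑ i, ∑ s, ∑ a, w i * (ps i s * π s a * M.T s a s') := Finset.sum_comm
    _ = ∑ i, w i * ∑ s, ∑ a, ps i s * π s a * M.T s a s' := by
        refine Finset.sum_congr rfl fun i _ => ?_
        rw [Finset.mul_sum]
        exact Finset.sum_congr rfl fun s _ => (Finset.mul_sum _ _ _).symm

lemma stateDistFrom_succ (M : MDP S A) (π : S → A → ℝ) (s0 : S) (t : ℕ) (s' : S) :
    stateDistFrom M π s0 (t + 1) s'
      = ∑ s1, (∑ a, π s0 a * M.T s0 a s1) * stateDistFrom M π s1 t s' := by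
  induction t generalizing s' with
  | zero =>
    show stepDist M π (stateDistFrom M π s0 0) s' = _
    simp only [stepDist, stateDistFrom, ite_mul, one_mul, zero_mul, mul_ite, mul_one, mul_zero]
    rw [Finset.sum_comm]
    simp [Finset.sum_ite_eq', Finset.sum_ite_eq]
  | succ t ih =>
    have h : stateDistFrom M π s0 (t + 1)
        = fun s => ∑ s1, (∑ a, π s0 a * M.T s0 a s1) * stateDistFrom M π s1 t s :=
      funext fun s => ih s
    show stepDist M π (stateDistFrom M π s0 (t + 1)) s' = _
    rw [h, stepDist_lin]
    rfl

lemma summable_V_term (M : MDP S A) (π : S → A → ℝ) (hπ : IsPolicy π) (s0 : S) :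
    Summable (fun t => M.γ ^ t * expReward M π (stateDistFrom M π s0 t)) := by
  set B := ∑ s, |∑ a, π s a * M.r s a| with hB
  have hBnn : 0 ≤ B := Finset.sum_nonneg fun s _ => abs_nonneg _
  refine Summable.of_norm_bounded
    ((summable_geometric_of_lt_one M.γ_nonneg M.γ_lt_one).mul_left B) fun t => ?_
  show ‖M.γ ^ t * expReward M π (stateDistFrom M π s0 t)‖ ≤ B * M.γ ^ t
  rw [Real.norm_eq_abs, abs_mul, abs_pow, abs_of_nonneg M.γ_nonneg, mul_comm B]
  refine mul_le_mul_of_nonneg_left ?_ (pow_nonneg M.γ_nonneg t)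
  calc |expReward M π (stateDistFrom M π s0 t)|
      ≤ ∑ s, |stateDistFrom M π s0 t s * ∑ a, π s a * M.r s a| := by
        exact Finset.abs_sum_le_sum_abs _ _
    _ ≤ B := by
        rw [hB]
        refine Finset.sum_le_sum fun s _ => ?_
        rw [abs_mul, abs_of_nonneg (stateDistFrom_nonneg M hπ s0 t s)]
        have h1 : stateDistFrom M π s0 t s ≤ 1 := by
          rw [← stateDistFrom_sum M hπ s0 t]
          exact Finset.single_le_sum (fun i _ => stateDistFrom_nonneg M hπ s0 t i) (Finset.mem_univ s)
        nlinarith [abs_nonneg (∑ a, π s a * M.r s a)]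

lemma bellman (M : MDP S A) (π : S → A → ℝ) (hπ : IsPolicy π) (s0 : S) :
    V M π s0 = (∑ a, π s0 a * M.r s0 a)
      + M.γ * ∑ s1, (∑ a, π s0 a * M.T s0 a s1) * V M π s1 := by
  have hs := summable_V_term M π hπ
  rw [V, Summable.tsum_eq_zero_add (hs s0)]
  have h0 : M.γ ^ 0 * expReward M π (stateDistFrom M π s0 0) = ∑ a, π s0 a * M.r s0 a := by
    simp [expReward, stateDistFrom, ite_mul, Finset.sum_ite_eq]
  have key : ∀ n : ℕ, M.γ ^ (n + 1) * expReward M π (stateDistFrom M π s0 (n + 1))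
      = ∑ s1, (M.γ * (∑ a, π s0 a * M.T s0 a s1))
          * (M.γ ^ n * expReward M π (stateDistFrom M π s1 n)) := by
    intro n
    have h1 : expReward M π (stateDistFrom M π s0 (n + 1))
        = ∑ s1, (∑ a, π s0 a * M.T s0 a s1) * expReward M π (stateDistFrom M π s1 n) := by
      simp only [expReward]
      calc ∑ s, stateDistFrom M π s0 (n + 1) s * ∑ a, π s a * M.r s a
          = ∑ s, ∑ s1, (∑ a, π s0 a * M.T s0 a s1)
              * (stateDistFrom M π s1 n s * ∑ a, π s a * M.r s a) := by
            refine Finset.sum_congr rfl fun s _ => ?_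
            rw [stateDistFrom_succ, Finset.sum_mul]
            exact Finset.sum_congr rfl fun s1 _ => by ring
        _ = ∑ s1, ∑ s, (∑ a, π s0 a * M.T s0 a s1)
              * (stateDistFrom M π s1 n s * ∑ a, π s a * M.r s a) := Finset.sum_comm
        _ = ∑ s1, (∑ a, π s0 a * M.T s0 a s1)
              * ∑ s, stateDistFrom M π s1 n s * ∑ a, π s a * M.r s a := by
            exact Finset.sum_congr rfl fun s1 _ => (Finset.mul_sum _ _ _).symm
    rw [h1, Finset.mul_sum]
    exact Finset.sum_congr rfl fun s1 _ => by ring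
  rw [tsum_congr key, Summable.tsum_finsetSum (fun s1 _ => ((hs s1).mul_left _)), h0]
  congr 1
  rw [Finset.mul_sum]
  refine Finset.sum_congr rfl fun s1 _ => ?_
  rw [tsum_mul_left]
  show M.γ * (∑ a, π s0 a * M.T s0 a s1) * V M π s1 = _
  ring

lemma sum_pi_adv (M : MDP S A) (π : S → A → ℝ) (hπ : IsPolicy π) (s : S) :
    ∑ a, π s a * Adv M π s a = 0 := by
  have e2 : ∑ a, π s a * V M π s = V M π s := by rw [← Finset.sum_mul, hπ.2, one_mul]
  have e1 : ∑ a, π s a * (M.γ * ∑ s', M.T s a s' * V M π s')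
      = M.γ * ∑ s1, (∑ a, π s a * M.T s a s1) * V M π s1 := by
    rw [Finset.mul_sum]
    calc ∑ a, π s a * (M.γ * ∑ s', M.T s a s' * V M π s')
        = ∑ a, ∑ s', M.γ * (π s a * M.T s a s' * V M π s') := by
          refine Finset.sum_congr rfl fun a _ => ?_
          rw [Finset.mul_sum, Finset.mul_sum]
          exact Finset.sum_congr rfl fun s' _ => by ring
      _ = ∑ s', ∑ a, M.γ * (π s a * M.T s a s' * V M π s') := Finset.sum_comm
      _ = ∑ s1, M.γ * ((∑ a, π s a * M.T s a s1) * V M π s1) := by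
          refine Finset.sum_congr rfl fun s1 _ => ?_
          rw [Finset.sum_mul, Finset.mul_sum]
  have h : ∑ a, π s a * Adv M π s a
      = ((∑ a, π s a * M.r s a) + ∑ a, π s a * (M.γ * ∑ s', M.T s a s' * V M π s'))
        - ∑ a, π s a * V M π s := by
    simp only [Adv, mul_sub, mul_add, Finset.sum_add_distrib, Finset.sum_sub_distrib]
  rw [h, e1, e2, bellman M π hπ s]
  ring

lemma tv_nonneg (p q : A → ℝ) : 0 ≤ tv p q := by
  unfold tv
  have : (0:ℝ) ≤ ∑ a, |p a - q a| := Finset.sum_nonneg fun a _ => abs_nonneg _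
  linarith

lemma tvMax_nonneg (p q : S → A → ℝ) : 0 ≤ tvMax p q :=
  Real.iSup_nonneg fun s => tv_nonneg _ _

lemma tv_le_tvMax (p q : S → A → ℝ) (s : S) : tv (p s) (q s) ≤ tvMax p q := by
  unfold tvMax
  exact le_ciSup (Set.finite_range fun s => tv (p s) (q s)).bddAbove s

lemma sum_min_eq (p q : A → ℝ) (hp : ∑ a, p a = 1) (hq : ∑ a, q a = 1) :
    ∑ a, min (p a) (q a) = 1 - tv p q := by
  have h : ∀ a, min (p a) (q a) = (p a + q a - |p a - q a|) / 2 := by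
    intro a
    rcases le_total (p a) (q a) with h | h
    · rw [min_eq_left h, abs_of_nonpos (by linarith)]; ring
    · rw [min_eq_right h, abs_of_nonneg (by linarith)]; ring
  rw [Finset.sum_congr rfl fun a _ => h a, ← Finset.sum_div, Finset.sum_sub_distrib,
    Finset.sum_add_distrib, hp, hq, tv]
  ring

lemma coupling (M : MDP S A) (π2 π3 : S → A → ℝ) (h2 : IsPolicy π2) (h3 : IsPolicy π3)
    (t : ℕ) :
    ∃ u : S → ℝ, (∀ s, 0 ≤ u s) ∧ (∀ s, u s ≤ stateDist M π2 t s)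
      ∧ (∀ s, u s ≤ stateDist M π3 t s) ∧ (1 - tvMax π2 π3) ^ t ≤ ∑ s, u s := by
  induction t with
  | zero =>
    exact ⟨M.ρ, M.ρ_nonneg, fun s => le_refl _, fun s => le_refl _, by rw [pow_zero, M.ρ_sum]⟩
  | succ t ih =>
    obtain ⟨u, hu0, hu2, hu3, hus⟩ := ih
    set m : S → A → ℝ := fun s a => min (π2 s a) (π3 s a) with hm
    have hm0 : ∀ s a, 0 ≤ m s a := fun s a => le_min (h2.1 s a) (h3.1 s a)
    refine ⟨stepDist M m u, stepDist_nonneg M hm0 hu0, ?_, ?_, ?_⟩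
    · intro s'
      refine Finset.sum_le_sum fun s _ => Finset.sum_le_sum fun a _ => ?_
      have : u s * m s a ≤ stateDist M π2 t s * π2 s a :=
        mul_le_mul (hu2 s) (min_le_left _ _) (hm0 s a) (stateDist_nonneg M h2 t s)
      exact mul_le_mul_of_nonneg_right this (M.T_nonneg s a s')
    · intro s'
      refine Finset.sum_le_sum fun s _ => Finset.sum_le_sum fun a _ => ?_
      have : u s * m s a ≤ stateDist M π3 t s * π3 s a :=
        mul_le_mul (hu3 s) (min_le_right _ _) (hm0 s a) (stateDist_nonneg M h3 t s)
      exact mul_le_mul_of_nonneg_right this (M.T_nonneg s a s')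
    · have hsum : ∑ s', stepDist M m u s' = ∑ s, u s * ∑ a, m s a := by
        unfold stepDist
        rw [Finset.sum_comm]
        refine Finset.sum_congr rfl fun s _ => ?_
        rw [Finset.sum_comm, Finset.mul_sum]
        refine Finset.sum_congr rfl fun a _ => ?_
        rw [← Finset.mul_sum, M.T_sum, mul_one]
      have hδ1 : tvMax π2 π3 ≤ 1 := by
        refine ciSup_le fun s => ?_
        unfold tv
        have h1 : ∑ a, |π2 s a - π3 s a| ≤ ∑ a, (π2 s a + π3 s a) := by
          refine Finset.sum_le_sum fun a _ => ?_
          rw [abs_sub_le_iff]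
          constructor <;> nlinarith [h2.1 s a, h3.1 s a]
        have h2' : ∑ a, (π2 s a + π3 s a) = 2 := by
          rw [Finset.sum_add_distrib, h2.2 s, h3.2 s]; norm_num
        linarith
      have hc : ∀ s, (1 - tvMax π2 π3) ≤ ∑ a, m s a := by
        intro s
        rw [hm]
        have := sum_min_eq (π2 s) (π3 s) (h2.2 s) (h3.2 s)
        rw [this]
        have := tv_le_tvMax π2 π3 s
        linarith
      rw [hsum, pow_succ]
      calc (1 - tvMax π2 π3) ^ t * (1 - tvMax π2 π3)
          ≤ (∑ s, u s) * (1 - tvMax π2 π3) := by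
            refine mul_le_mul_of_nonneg_right hus (by linarith [tvMax_nonneg π2 π3]) |>.trans_eq rfl
        _ ≤ ∑ s, u s * ∑ a, m s a := by
            rw [Finset.sum_mul]
            exact Finset.sum_le_sum fun s _ => mul_le_mul_of_nonneg_left (hc s) (hu0 s)


/-- Multi-agent advantage discrepancy lemma: the difference between the
expected advantage of `π¹` at time `t`, with states from rolling out `π²`
versus `π³` and actions from `π²` in both, is bounded by
`4ε · D_TV^max(π¹‖π²) · (1 − (1 − D_TV^max(π²‖π³))^t)`. -/
theorem advantage_discrepancy (M : MDP S A) (π1 π2 π3 : S → A → ℝ)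
    (h1 : IsPolicy π1) (h2 : IsPolicy π2) (h3 : IsPolicy π3)
    (ε : ℝ) (hε : ε = ⨆ s : S, ⨆ a : A, |Adv M π1 s a|) (t : ℕ) :
    |(∑ s, stateDist M π2 t s * ∑ a, π2 s a * Adv M π1 s a)
        - ∑ s, stateDist M π3 t s * ∑ a, π2 s a * Adv M π1 s a|
      ≤ 4 * ε * tvMax π1 π2 * (1 - (1 - tvMax π2 π3) ^ t) := by
  have hεa : ∀ s a, |Adv M π1 s a| ≤ ε := by
    intro s a
    rw [hε]
    have hb1 : BddAbove (Set.range fun a => |Adv M π1 s a|) := (Set.finite_range _).bddAbove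
    have hb2 : BddAbove (Set.range fun s => ⨆ a, |Adv M π1 s a|) := (Set.finite_range _).bddAbove
    exact le_trans (le_ciSup hb1 a) (le_ciSup hb2 s)
  have hεnn : 0 ≤ ε :=
    le_trans (abs_nonneg _) (hεa (Classical.arbitrary S) (Classical.arbitrary A))
  set D := tvMax π1 π2 with hD
  set δ := tvMax π2 π3 with hδ
  have hDnn : 0 ≤ D := tvMax_nonneg _ _
  have hf : ∀ s, |∑ a, π2 s a * Adv M π1 s a| ≤ 2 * ε * D := by
    intro s
    have h0 : ∑ a, π2 s a * Adv M π1 s a = ∑ a, (π2 s a - π1 s a) * Adv M π1 s a := by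
      rw [Finset.sum_congr rfl (fun a _ => sub_mul (π2 s a) (π1 s a) (Adv M π1 s a)),
        Finset.sum_sub_distrib, sum_pi_adv M π1 h1 s, sub_zero]
    rw [h0]
    calc |∑ a, (π2 s a - π1 s a) * Adv M π1 s a|
        ≤ ∑ a, |(π2 s a - π1 s a) * Adv M π1 s a| := Finset.abs_sum_le_sum_abs _ _
      _ ≤ ∑ a, |π2 s a - π1 s a| * ε := by
          refine Finset.sum_le_sum fun a _ => ?_
          rw [abs_mul]
          exact mul_le_mul_of_nonneg_left (hεa s a) (abs_nonneg _)
      _ = (∑ a, |π1 s a - π2 s a|) * ε := by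
          rw [Finset.sum_mul]
          exact Finset.sum_congr rfl fun a _ => by rw [abs_sub_comm]
      _ = 2 * tv (π1 s) (π2 s) * ε := by rw [tv]; ring
      _ ≤ 2 * D * ε := by
          have := tv_le_tvMax π1 π2 s
          nlinarith [tv_nonneg (π1 s) (π2 s)]
      _ = 2 * ε * D := by ring
  obtain ⟨u, hu0, hu2, hu3, hus⟩ := coupling M π2 π3 h2 h3 t
  have habs : ∑ s, |stateDist M π2 t s - stateDist M π3 t s| ≤ 2 * (1 - (1 - δ) ^ t) := by
    have hm : ∀ s, |stateDist M π2 t s - stateDist M π3 t s|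
        = stateDist M π2 t s + stateDist M π3 t s
          - 2 * min (stateDist M π2 t s) (stateDist M π3 t s) := by
      intro s
      rcases le_total (stateDist M π2 t s) (stateDist M π3 t s) with h | h
      · rw [abs_of_nonpos (by linarith), min_eq_left h]; ring
      · rw [abs_of_nonneg (by linarith), min_eq_right h]; ring
    rw [Finset.sum_congr rfl fun s _ => hm s, Finset.sum_sub_distrib, Finset.sum_add_distrib,
      stateDist_sum M h2 t, stateDist_sum M h3 t, ← Finset.mul_sum]
    have hmin : (1 - δ) ^ t ≤ ∑ s, min (stateDist M π2 t s) (stateDist M π3 t s) :=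
      le_trans hus (Finset.sum_le_sum fun s _ => le_min (hu2 s) (hu3 s))
    linarith
  calc |(∑ s, stateDist M π2 t s * ∑ a, π2 s a * Adv M π1 s a)
        - ∑ s, stateDist M π3 t s * ∑ a, π2 s a * Adv M π1 s a|
      = |∑ s, (stateDist M π2 t s - stateDist M π3 t s) * ∑ a, π2 s a * Adv M π1 s a| := by
        rw [← Finset.sum_sub_distrib]
        congr 1
        exact Finset.sum_congr rfl fun s _ => (sub_mul _ _ _).symm
    _ ≤ ∑ s, |(stateDist M π2 t s - stateDist M π3 t s) * ∑ a, π2 s a * Adv M π1 s a| :=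
        Finset.abs_sum_le_sum_abs _ _
    _ ≤ ∑ s, |stateDist M π2 t s - stateDist M π3 t s| * (2 * ε * D) := by
        refine Finset.sum_le_sum fun s _ => ?_
        rw [abs_mul]
        exact mul_le_mul_of_nonneg_left (hf s) (abs_nonneg _)
    _ = (∑ s, |stateDist M π2 t s - stateDist M π3 t s|) * (2 * ε * D) := by
        rw [Finset.sum_mul]
    _ ≤ (2 * (1 - (1 - δ) ^ t)) * (2 * ε * D) :=
        mul_le_mul_of_nonneg_right habs (by positivity)
    _ = 4 * ε * D * (1 - (1 - δ) ^ t) := by ring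

end A2PO
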